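/- arXiv:2303.17082 — 2 statements merged into one kernel-verified Lean document; each statement's English description precedes it below -/
import Mathlib

section
/- Let (Ω,F,(F_t)_{t≥0},P) be a filtered probability space. Call h an elementary predictable process bounded by one if h = a_0·1_{{0}} + Σ_{i=1}^{m−1} a_i·1_{(t_i,t_{i+1}]} for some m∈ℕ and 0 < t_1 < t_2 < ⋯ < t_m < ∞, where a_0 is F_0-measurable with |a_0|≤1 and, for i=1,…,m−1, a_i is F_{t_i}-measurable with |a_i|≤1. For a real-valued process y=(y_t)_{t≥0} and such an h, set (h·y)_t = a_0·y_0 + Σ_{i=1}^{m−1} a_i·( y_{t_{i+1}∧t} − y_{t_i∧t} ). Let y^n, n∈ℕ, be real-valued processes with each y^n_t measurable and with almost surely right-continuous paths. If for every T>0 and ε>0 one has sup_h P( sup_{0≤t≤T} |(h·y^n)_t| ≥ ε ) → 0 as n→∞, where the supremum runs over all elementary predictable processes h bounded by one, then y^n converges to 0 uniformly on compacts in probability: for every T>0 and ε>0, P( sup_{0≤t≤T} |y^n_t| ≥ ε ) → 0 as n→∞. -/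
open MeasureTheory Filter Topology
open scoped NNReal

/-- An elementary predictable process bounded by one, relative to a filtration `𝓕`:
its data are times `0 < t 0 < t 1 < ⋯ < t k` and coefficients `a0` (`𝓕 0`-measurable)
and `a i` (`𝓕 (t i)`-measurable), all bounded by one in absolute value. The associated
process is `a0 • 1_{{0}} + ∑ i, a i • 1_{(t i, t (i+1)]}`. -/
structure ElemPred (Ω : Type*) [mΩ : MeasurableSpace Ω]
    (𝓕 : MeasureTheory.Filtration ℝ≥0 mΩ) where
  k : ℕ
  t : Fin (k + 1) → ℝ≥0
  t_pos : 0 < t 0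
  t_mono : StrictMono t
  a0 : Ω → ℝ
  a0_meas : Measurable[𝓕 0] a0
  a0_le : ∀ ω, |a0 ω| ≤ 1
  a : Fin k → Ω → ℝ
  a_meas : ∀ i, Measurable[𝓕 (t i.castSucc)] (a i)
  a_le : ∀ i ω, |a i ω| ≤ 1

/-- The elementary stochastic integral `(h · y)_s` of an elementary predictable process
`h` against a real-valued process `y`:
`(h·y)_s = a0 y_0 + ∑ i, a i (y_{t(i+1) ∧ s} - y_{t(i) ∧ s})`. -/
def ElemPred.integral {Ω : Type*} [mΩ : MeasurableSpace Ω]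
    {𝓕 : MeasureTheory.Filtration ℝ≥0 mΩ} (h : ElemPred Ω 𝓕)
    (y : ℝ≥0 → Ω → ℝ) (s : ℝ≥0) (ω : Ω) : ℝ :=
  h.a0 ω * y 0 ω +
    ∑ i : Fin h.k, h.a i ω * (y (min (h.t i.succ) s) ω - y (min (h.t i.castSucc) s) ω)

open scoped ENNReal

/-- The elementary predictable process with integral `y 0`. -/
def epZero {Ω : Type*} [mΩ : MeasurableSpace Ω]
    (𝓕 : MeasureTheory.Filtration ℝ≥0 mΩ) : ElemPred Ω 𝓕 where
  k := 0
  t := fun _ => 1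
  t_pos := one_pos
  t_mono := fun i j hij => absurd (Fin.ext (by omega) : i = j) (ne_of_lt hij)
  a0 := fun _ => 1
  a0_meas := measurable_const
  a0_le := fun _ => by norm_num
  a := fun i => i.elim0
  a_meas := fun i => i.elim0
  a_le := fun i => i.elim0

lemma epZero_integral {Ω : Type*} [mΩ : MeasurableSpace Ω]
    (𝓕 : MeasureTheory.Filtration ℝ≥0 mΩ) (y : ℝ≥0 → Ω → ℝ) (s : ℝ≥0) (ω : Ω) :
    (epZero 𝓕).integral y s ω = y 0 ω := by
  simp [ElemPred.integral, epZero]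

/-- The elementary predictable process with integral `y (min v s) - y (min u s)`. -/
def epInterval {Ω : Type*} [mΩ : MeasurableSpace Ω]
    (𝓕 : MeasureTheory.Filtration ℝ≥0 mΩ) (u v : ℝ≥0) (hu : 0 < u) (huv : u < v) :
    ElemPred Ω 𝓕 where
  k := 1
  t := ![u, v]
  t_pos := hu
  t_mono := by
    intro i j hij
    fin_cases i <;> fin_cases j <;>
      simp_all [Fin.lt_def]
  a0 := fun _ => 0
  a0_meas := measurable_const
  a0_le := fun _ => by norm_num
  a := fun _ _ => 1
  a_meas := fun _ => measurable_const
  a_le := fun _ _ => by norm_num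

lemma epInterval_integral {Ω : Type*} [mΩ : MeasurableSpace Ω]
    (𝓕 : MeasureTheory.Filtration ℝ≥0 mΩ) (u v : ℝ≥0) (hu : 0 < u) (huv : u < v)
    (y : ℝ≥0 → Ω → ℝ) (s : ℝ≥0) (ω : Ω) :
    (epInterval 𝓕 u v hu huv).integral y s ω = y (min v s) ω - y (min u s) ω := by
  simp [ElemPred.integral, epInterval, Fin.sum_univ_one]
  change (1:ℕ) * y (min v s) ω - ∑ x : Fin 1, y (min (![u, v] x.castSucc) s) ω = _
  simp

/-- If `sup_h P( sup_{0 ≤ s ≤ T} |(h·yⁿ)_s| ≥ ε ) → 0`, where `h` runs over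
the elementary predictable processes bounded by one, then `yⁿ → 0` uniformly on compacts
in probability. -/
theorem ucp_of_elementary_integrals
    {Ω : Type*} [mΩ : MeasurableSpace Ω] (P : Measure Ω) [IsProbabilityMeasure P]
    (𝓕 : MeasureTheory.Filtration ℝ≥0 mΩ)
    (y : ℕ → ℝ≥0 → Ω → ℝ) (hymeas : ∀ n t, Measurable (y n t))
    (hyrc : ∀ n, ∀ᵐ ω ∂P, ∀ t : ℝ≥0,
      ContinuousWithinAt (fun s => y n s ω) (Set.Ici t) t)
    (hint : ∀ T : ℝ≥0, 0 < T → ∀ ε : ℝ, 0 < ε →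
      Tendsto
        (fun n => ⨆ h : ElemPred Ω 𝓕,
          P {ω | ∃ s ∈ Set.Icc (0 : ℝ≥0) T, ε ≤ |h.integral (y n) s ω|})
        atTop (𝓝 0)) :
    ∀ T : ℝ≥0, 0 < T → ∀ ε : ℝ, 0 < ε →
      Tendsto (fun n => P {ω | ∃ s ∈ Set.Icc (0 : ℝ≥0) T, ε ≤ |y n s ω|})
        atTop (𝓝 0) := by
  intro T hT ε hε
  classical
  have hε6 : (0:ℝ) < ε/6 := by linarith
  set g : ℕ → ℝ≥0∞ := fun n => ⨆ h : ElemPred Ω 𝓕,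
      P {ω | ∃ s ∈ Set.Icc (0 : ℝ≥0) T, ε/3 ≤ |h.integral (y n) s ω|} with hgdef
  have hgto : Tendsto g atTop (𝓝 0) := hint T hT (ε/3) (by linarith)
  -- the auxiliary sets near 0
  set B : ℕ → ℕ → Set Ω := fun n m =>
      {ω | ∃ q : ℚ, 0 < q ∧ (q:ℝ) ≤ 1/(m+1) ∧
        ε/6 ≤ |y n (Real.toNNReal q) ω - y n 0 ω|} with hBdef
  have hBmeas : ∀ n m, MeasurableSet (B n m) := by
    intro n m
    rw [hBdef]
    simp only [Set.setOf_exists]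
    refine MeasurableSet.iUnion fun q => ?_
    have : {ω | 0 < q ∧ (q:ℝ) ≤ 1/(m+1) ∧
        ε/6 ≤ |y n (Real.toNNReal q) ω - y n 0 ω|}
        = {ω : Ω | 0 < q} ∩ ({ω : Ω | (q:ℝ) ≤ 1/(m+1)} ∩
          {ω | ε/6 ≤ |y n (Real.toNNReal q) ω - y n 0 ω|}) := rfl
    rw [this]
    exact (MeasurableSet.const _).inter ((MeasurableSet.const _).inter
      (measurableSet_le measurable_const
        (((hymeas n _).sub (hymeas n 0)).abs)))
  have hBanti : ∀ n, Antitone (B n) := by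
    intro n m m' hmm' ω hω
    obtain ⟨q, hq0, hq1, hq2⟩ := hω
    refine ⟨q, hq0, le_trans hq1 ?_, hq2⟩
    apply one_div_le_one_div_of_le (by positivity)
    have : (m:ℝ) ≤ m' := by exact_mod_cast hmm'
    linarith
  have hBnull : ∀ n, P (⋂ m, B n m) = 0 := by
    intro n
    have hae := hyrc n
    rw [ae_iff] at hae
    refine measure_mono_null ?_ hae
    intro ω hω
    simp only [Set.mem_iInter] at hω
    simp only [Set.mem_setOf_eq]
    intro hrc
    have hc := (Metric.continuousWithinAt_iff.mp (hrc 0)) (ε/6) hε6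
    obtain ⟨δ, hδ, hδc⟩ := hc
    obtain ⟨m, hm⟩ := exists_nat_one_div_lt hδ
    obtain ⟨q, hq0, hq1, hq2⟩ := hω m
    have hqmem : Real.toNNReal q ∈ Set.Ici (0:ℝ≥0) := Set.mem_Ici.mpr zero_le
    have hqdist : dist (Real.toNNReal q) (0:ℝ≥0) < δ := by
      rw [NNReal.dist_eq]
      simp only [NNReal.coe_zero, sub_zero]
      rw [abs_of_nonneg (Real.toNNReal q).coe_nonneg]
      rw [Real.coe_toNNReal _ (le_of_lt (by exact_mod_cast hq0))]
      calc (q:ℝ) ≤ 1/(m+1) := hq1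
        _ < δ := hm
    have := hδc hqmem hqdist
    rw [Real.dist_eq] at this
    linarith [le_trans hq2 (le_of_lt this)]
  have hBto : ∀ n, Tendsto (fun m => P (B n m)) atTop (𝓝 0) := by
    intro n
    have h := tendsto_measure_iInter_atTop (μ := P)
      (fun m => (hBmeas n m).nullMeasurableSet) (hBanti n) ⟨0, measure_ne_top P _⟩
    rwa [hBnull n] at h
  have hchoice : ∀ n : ℕ, ∃ m : ℕ,
      P (B n m) ≤ ((n:ℝ≥0∞))⁻¹ ∧ (1:ℝ)/(m+1) < T := by
    intro n
    have h1 : ∀ᶠ m in atTop, P (B n m) ≤ ((n:ℝ≥0∞))⁻¹ := by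
      refine (hBto n).eventually_le_const ?_
      simp [ENNReal.inv_pos]
    have h2 : ∀ᶠ m : ℕ in atTop, (1:ℝ)/(m+1) < T :=
      tendsto_one_div_add_atTop_nhds_zero_nat.eventually_lt_const (by exact_mod_cast hT)
    exact (h1.and h2).exists
  choose m hm1 hm2 using hchoice
  set v : ℕ → ℝ≥0 := fun n => Real.toNNReal (1/(m n + 1)) with hvdef
  have hvcoe : ∀ n, ((v n : ℝ≥0) : ℝ) = 1/(m n + 1) := fun n =>
    Real.coe_toNNReal _ (by positivity)
  have hvpos : ∀ n, 0 < v n := fun n => Real.toNNReal_pos.mpr (by positivity)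
  have hvlt : ∀ n, v n < T := by
    intro n
    rw [← NNReal.coe_lt_coe, hvcoe]
    exact hm2 n
  -- the rational 1/(m n + 1) hits v n
  have hqv : ∀ n, Real.toNNReal ((1/(m n + 1) : ℚ) : ℝ) = v n := by
    intro n
    rw [hvdef]
    congr 1
    push_cast
    ring
  -- main inclusion
  have hsub : ∀ n, {ω | ∃ s ∈ Set.Icc (0:ℝ≥0) T, ε ≤ |y n s ω|} ⊆
      (({ω | ∃ s ∈ Set.Icc (0:ℝ≥0) T, ε/3 ≤ |(epZero 𝓕).integral (y n) s ω|} ∪ B n (m n)) ∪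
       {ω | ∃ s ∈ Set.Icc (0:ℝ≥0) T,
          ε/3 ≤ |(epInterval 𝓕 (v n) T (hvpos n) (hvlt n)).integral (y n) s ω|}) ∪
      {ω | ¬ ∀ t : ℝ≥0, ContinuousWithinAt (fun s => y n s ω) (Set.Ici t) t} := by
    intro n ω hω
    obtain ⟨s, hs, hys⟩ := hω
    by_cases hrc : ∀ t : ℝ≥0, ContinuousWithinAt (fun u => y n u ω) (Set.Ici t) t
    swap
    · exact Or.inr hrc
    left
    by_cases h0 : ε/3 ≤ |y n 0 ω|
    · refine Or.inl (Or.inl ⟨0, ⟨le_refl _, zero_le⟩, ?_⟩)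
      rw [epZero_integral]; exact h0
    push_neg at h0
    by_cases hsv : s ≤ v n
    · -- the quiet interval near 0
      left; right
      have hspos : 0 < s := by
        rcases (zero_le : (0:ℝ≥0) ≤ s).lt_or_eq with h | h
        · exact h
        · exfalso; rw [← h] at hys; linarith
      have hdiff : 2*ε/3 ≤ |y n s ω - y n 0 ω| := by
        have h1 : |y n s ω| - |y n 0 ω| ≤ |y n s ω - y n 0 ω| :=
          abs_sub_abs_le_abs_sub _ _
        linarith
      rcases hsv.lt_or_eq with hlt | heq
      · -- s < v n : approximate from the right by a rational
        have hc := (Metric.continuousWithinAt_iff.mp (hrc s)) (ε/6) hε6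
        obtain ⟨δ, hδ, hδc⟩ := hc
        have hlt' : (s:ℝ) < min ((v n : ℝ≥0) : ℝ) ((s:ℝ) + δ) :=
          lt_min (by exact_mod_cast hlt) (by linarith)
        obtain ⟨q, hq1, hq2⟩ := exists_rat_btwn hlt'
        have hq0 : (0:ℝ) < q := lt_of_le_of_lt s.coe_nonneg hq1
        have hqle : (q:ℝ) ≤ 1/(m n + 1) := by
          have : (q:ℝ) < ((v n : ℝ≥0) : ℝ) := lt_of_lt_of_le hq2 (min_le_left _ _)
          rw [hvcoe] at this
          linarith
        refine ⟨q, by exact_mod_cast hq0, hqle, ?_⟩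
        have hmem : Real.toNNReal q ∈ Set.Ici s := by
          rw [Set.mem_Ici, ← NNReal.coe_le_coe,
            Real.coe_toNNReal _ (le_of_lt hq0)]
          exact le_of_lt hq1
        have hdist : dist (Real.toNNReal q) s < δ := by
          rw [NNReal.dist_eq, Real.coe_toNNReal _ (le_of_lt hq0)]
          have hq3 : (q:ℝ) < (s:ℝ) + δ := lt_of_lt_of_le hq2 (min_le_right _ _)
          rw [abs_of_nonneg (by linarith)]
          linarith
        have hnear := hδc hmem hdist
        rw [Real.dist_eq] at hnear
        have htri : |y n s ω - y n 0 ω| ≤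
            |y n s ω - y n (Real.toNNReal q) ω| + |y n (Real.toNNReal q) ω - y n 0 ω| :=
          abs_sub_le _ _ _
        have habs : |y n s ω - y n (Real.toNNReal q) ω|
            = |y n (Real.toNNReal q) ω - y n s ω| := abs_sub_comm _ _
        linarith
      · -- s = v n
        refine ⟨1/(m n + 1), by positivity, le_of_eq (by push_cast; ring), ?_⟩
        rw [hqv n, ← heq]
        linarith
    · -- s > v n
      push_neg at hsv
      by_cases hv : ε/6 ≤ |y n (v n) ω - y n 0 ω|
      · left; right
        exact ⟨1/(m n + 1), by positivity, le_of_eq (by push_cast; ring),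
          by rw [hqv n]; exact hv⟩
      · right
        push_neg at hv
        refine ⟨s, hs, ?_⟩
        rw [epInterval_integral, min_eq_right hs.2, min_eq_left (le_of_lt hsv)]
        have h1 : |y n (v n) ω| ≤ |y n (v n) ω - y n 0 ω| + |y n 0 ω| := by
          have := abs_sub_le (y n (v n) ω) (y n 0 ω) 0
          simpa using this
        have h2 : |y n s ω| - |y n (v n) ω| ≤ |y n s ω - y n (v n) ω| :=
          abs_sub_abs_le_abs_sub _ _
        linarith
  -- measure estimate
  have hle : ∀ n, P {ω | ∃ s ∈ Set.Icc (0:ℝ≥0) T, ε ≤ |y n s ω|} ≤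
      g n + ((n:ℝ≥0∞))⁻¹ + g n := by
    intro n
    have hN : P {ω | ¬ ∀ t : ℝ≥0,
        ContinuousWithinAt (fun s => y n s ω) (Set.Ici t) t} = 0 := by
      have := hyrc n
      rwa [ae_iff] at this
    refine le_trans (measure_mono (hsub n)) ?_
    refine le_trans (measure_union_le _ _) ?_
    rw [hN, add_zero]
    refine le_trans (measure_union_le _ _) ?_
    refine add_le_add (le_trans (measure_union_le _ _) (add_le_add ?_ (hm1 n))) ?_
    · exact le_iSup (fun h : ElemPred Ω 𝓕 =>
        P {ω | ∃ s ∈ Set.Icc (0:ℝ≥0) T, ε/3 ≤ |h.integral (y n) s ω|}) (epZero 𝓕)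
    · exact le_iSup (fun h : ElemPred Ω 𝓕 =>
        P {ω | ∃ s ∈ Set.Icc (0:ℝ≥0) T, ε/3 ≤ |h.integral (y n) s ω|})
        (epInterval 𝓕 (v n) T (hvpos n) (hvlt n))
  -- conclude
  have hb : Tendsto (fun n => g n + ((n:ℝ≥0∞))⁻¹ + g n) atTop (𝓝 0) := by
    have h2 : Tendsto (fun n : ℕ => ((n:ℝ≥0∞))⁻¹) atTop (𝓝 0) :=
      ENNReal.tendsto_inv_nat_nhds_zero
    have := (hgto.add h2).add hgto
    simpa using this
  exact tendsto_of_tendsto_of_tendsto_of_le_of_le tendsto_const_nhds hb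
    (fun n => zero_le) hle
end

section
/- Let E be a real barrelled locally convex topological vector space and E' its topological dual endowed with the strong topology. Let (Ω,F,P) be a probability space. For each n ∈ {0,1,2,…} let η^n:Ω→E' be Borel measurable; let Z^n=(Z^n_t)_{t≥0} be an E'-valued process with each Z^n_t Borel measurable and with almost surely continuous paths in E'; let S^n:[0,∞)→L(E,E) be a family of continuous linear operators on E such that for each φ∈E the orbit map t↦S^n(t)φ is continuous; and let A^n:E→E be a continuous linear operator. For each n, φ∈E, t≥0 and ω∈Ω define Y^n(φ)_t(ω) = ⟨η^n(ω) − Z^n_0(ω), S^n(t)φ⟩ + ∫_0^t ⟨Z^n_s(ω), S^n(t−s)A^nφ⟩ ds + ⟨Z^n_t(ω), φ⟩. Assume: (1) there exists a von Neumann bounded subset K of E' such that P( η^0 ∈ K and Z^0_0 ∈ K ) = 1, and for every T>0 there exist C>0 and a continuous seminorm ρ on E such that almost surely |⟨Z^0_t, ψ⟩| ≤ C ρ(ψ) for all t∈[0,T] and all ψ∈E; (2) for every continuous seminorm q on E' and every ε>0, P( q(η^n − η^0) ≥ ε ) → 0 as n→∞; (3) for every φ∈E, every T>0 and every continuous seminorm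 ρ on E: sup_{0≤t≤T} ρ( S^n(t)φ − S^0(t)φ ) → 0 and sup_{0≤s≤t≤T} ρ( S^n(t−s)A^nφ − S^0(t−s)A^0φ ) → 0 as n→∞, and moreover the sets ⋃_{n≥0}{ S^n(t)φ : 0≤t≤T } and ⋃_{n≥0}{ S^n(t−s)A^nφ : 0≤s≤t≤T } are von Neumann bounded in E; (4) for every continuous seminorm q on E', every T>0 and every ε>0, P( sup_{0≤t≤T} q( Z^n_t − Z^0_t ) ≥ ε ) → 0 as n→∞. Then for every φ∈E, the real-valued processes Y^n(φ) converge to Y^0(φ) uniformly on compacts in probability: for every T>0 and ε>0, P( sup_{0≤t≤T} | Y^n(φ)_t − Y^0(φ)_t | ≥ ε ) → 0 as n→∞. -/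
open MeasureTheory Filter Topology

section Helpers

variable {E : Type*} [AddCommGroup E] [Module ℝ E] [TopologicalSpace E]
    [IsTopologicalAddGroup E] [ContinuousSMul ℝ E]

/-- Evaluation at a point as a linear map on the dual. -/
private def evalLM (x : E) : (E →L[ℝ] ℝ) →ₗ[ℝ] ℝ where
  toFun f := f x
  map_add' f g := rfl
  map_smul' c f := rfl

/-- For every von Neumann bounded set `B ⊆ E`, the sup over `B` of the evaluation gives a
continuous seminorm on the strong dual. -/
private lemma exists_dual_seminorm (B : Set E) (hB : Bornology.IsVonNBounded ℝ B) :
    ∃ q : Seminorm ℝ (E →L[ℝ] ℝ), Continuous q ∧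
      ∀ f : E →L[ℝ] ℝ, ∀ x ∈ B, |f x| ≤ q f := by
  set p : B → Seminorm ℝ (E →L[ℝ] ℝ) :=
    fun x => (normSeminorm ℝ ℝ).comp (evalLM (x : E)) with hpdef
  have hp_apply : ∀ (x : B) (f : E →L[ℝ] ℝ), p x f = |f (x : E)| := by
    intro x f
    simp [hpdef, Seminorm.comp_apply, Real.norm_eq_abs, evalLM]
  have hbdd : BddAbove (Set.range p) := by
    rw [Seminorm.bddAbove_range_iff]
    intro f
    obtain ⟨r, hr⟩ := (NormedSpace.image_isVonNBounded_iff ℝ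
      (f := fun x : E => f x)).mp (hB.image f)
    refine ⟨r, ?_⟩
    rintro y ⟨x, rfl⟩
    simp only [hp_apply, ← Real.norm_eq_abs]
    exact hr x x.2
  refine ⟨⨆ x, p x, ?_, ?_⟩
  · apply Seminorm.continuous' (r := 1)
    have hb : (𝓝 (0 : E →L[ℝ] ℝ)).HasBasis
        (fun SV : Set E × Set ℝ => Bornology.IsVonNBounded ℝ SV.1 ∧ SV.2 ∈ (𝓝 (0 : ℝ)))
        (fun SV => { f : E →L[ℝ] ℝ | ∀ x ∈ SV.1, f x ∈ SV.2 }) :=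
      ContinuousLinearMap.hasBasis_nhds_zero
    rw [hb.mem_iff]
    refine ⟨⟨B, Metric.closedBall (0 : ℝ) 1⟩,
      ⟨hB, Metric.closedBall_mem_nhds 0 one_pos⟩, ?_⟩
    intro f hf
    rw [Seminorm.mem_closedBall_zero, Seminorm.iSup_apply hbdd]
    refine Real.iSup_le (fun x => ?_) zero_le_one
    rw [hp_apply]
    have := hf (x : E) x.2
    rwa [Metric.mem_closedBall, Real.dist_0_eq_abs] at this
  · intro f x hx
    rw [Seminorm.iSup_apply hbdd]
    have hb' : BddAbove (Set.range fun x : B => p x f) :=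
      Seminorm.bddAbove_range_iff.mp hbdd f
    have := le_ciSup hb' (⟨x, hx⟩ : B)
    rwa [hp_apply] at this

/-- Uniform boundedness: a von Neumann bounded subset of the strong dual of a barrelled
space is dominated by a single continuous seminorm. -/
private lemma exists_primal_seminorm [BarrelledSpace ℝ E] (K : Set (E →L[ℝ] ℝ))
    (hK : Bornology.IsVonNBounded ℝ K) :
    ∃ ρ : Seminorm ℝ E, Continuous ρ ∧ ∀ f ∈ K, ∀ ψ : E, |f ψ| ≤ ρ ψ := by
  set p : K → Seminorm ℝ E :=
    fun f => (normSeminorm ℝ ℝ).comp ((f : E →L[ℝ] ℝ) : E →ₗ[ℝ] ℝ) with hpdef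
  have hp_apply : ∀ (f : K) (ψ : E), p f ψ = |(f : E →L[ℝ] ℝ) ψ| := by
    intro f ψ
    simp [hpdef, Seminorm.comp_apply, Real.norm_eq_abs]
  have hbdd : BddAbove (Set.range p) := by
    rw [Seminorm.bddAbove_range_iff]
    intro ψ
    have hev : Continuous fun f : E →L[ℝ] ℝ => f ψ := continuous_eval_const ψ
    let ev : (E →L[ℝ] ℝ) →L[ℝ] ℝ := ⟨evalLM ψ, hev⟩
    obtain ⟨r, hr⟩ := (NormedSpace.image_isVonNBounded_iff ℝ
      (f := fun f : E →L[ℝ] ℝ => ev f)).mp (hK.image ev)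
    refine ⟨r, ?_⟩
    rintro y ⟨f, rfl⟩
    simp only [hp_apply, ← Real.norm_eq_abs]
    exact hr f f.2
  refine ⟨⨆ f, p f, ?_, ?_⟩
  · have hco : ⇑(⨆ f, p f) = ⨆ f, ⇑(p f) := Seminorm.coe_iSup_eq hbdd
    rw [hco]
    refine Seminorm.continuous_iSup p (fun f => ?_) hbdd
    have : ⇑(p f) = fun ψ => ‖(f : E →L[ℝ] ℝ) ψ‖ := by
      funext ψ; rw [hp_apply, Real.norm_eq_abs]
    rw [this]
    exact (f : E →L[ℝ] ℝ).continuous.norm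
  · intro f hf ψ
    rw [Seminorm.iSup_apply hbdd]
    have hb' : BddAbove (Set.range fun f : K => p f ψ) :=
      Seminorm.bddAbove_range_iff.mp hbdd ψ
    have := le_ciSup hb' (⟨f, hf⟩ : K)
    rwa [hp_apply] at this

/-- Joint continuity of the evaluation along continuous paths, when the primal path stays in a
set dominated by a continuous dual seminorm. -/
private lemma eval_continuousOn {Z : ℝ → (E →L[ℝ] ℝ)} {x : ℝ → E} {s : Set ℝ}
    (q : Seminorm ℝ (E →L[ℝ] ℝ)) (hq : Continuous q)
    (hdom : ∀ u ∈ s, ∀ f : E →L[ℝ] ℝ, |f (x u)| ≤ q f)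
    (hZ : ContinuousOn Z s) (hx : ContinuousOn x s) :
    ContinuousOn (fun u => Z u (x u)) s := by
  intro u₀ hu₀
  have h1 : ContinuousWithinAt (fun u => (Z u₀) (x u)) s u₀ :=
    ((Z u₀).continuous.comp_continuousOn hx) u₀ hu₀
  have hq0 : Tendsto (fun u => q (Z u - Z u₀)) (𝓝[s] u₀) (𝓝 0) := by
    have hcw : ContinuousWithinAt (fun u => q (Z u - Z u₀)) s u₀ :=
      hq.continuousAt.comp_continuousWithinAt ((hZ u₀ hu₀).sub continuousWithinAt_const)
    have htd : Tendsto (fun u => q (Z u - Z u₀)) (𝓝[s] u₀) (𝓝 (q (Z u₀ - Z u₀))) := hcw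
    simpa [sub_self, map_zero] using htd
  have h2 : Tendsto (fun u => (Z u - Z u₀) (x u)) (𝓝[s] u₀) (𝓝 0) := by
    refine squeeze_zero_norm' ?_ hq0
    filter_upwards [self_mem_nhdsWithin] with u hu
    rw [Real.norm_eq_abs]
    exact hdom u hu _
  have h1' : Tendsto (fun u => (Z u₀) (x u)) (𝓝[s] u₀) (𝓝 ((Z u₀) (x u₀))) := h1
  have key : Tendsto (fun u => (Z u - Z u₀) (x u) + (Z u₀) (x u)) (𝓝[s] u₀)
      (𝓝 (0 + (Z u₀) (x u₀))) := h2.add h1'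
  rw [zero_add] at key
  have heq : ∀ u, (Z u - Z u₀) (x u) + (Z u₀) (x u) = Z u (x u) := by
    intro u; simp [ContinuousLinearMap.sub_apply]
  simp only [heq] at key
  exact key

end Helpers

/-- ucp convergence of the (weak) solutions
`⟨Yⁿ_t, φ⟩ = ⟨ηⁿ - Zⁿ_0, Sⁿ(t)φ⟩ + ∫_0^t ⟨Zⁿ_s, Sⁿ(t-s)Aⁿφ⟩ ds + ⟨Zⁿ_t, φ⟩`
of linear stochastic evolution equations driven by semimartingale noise, under
convergence assumptions on the initial conditions `ηⁿ`, the semigroups `Sⁿ` and their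
generators `Aⁿ`, and the noises `Zⁿ`. -/
theorem ucp_convergence_solutions_SPDE
    {E : Type*} [AddCommGroup E] [Module ℝ E] [TopologicalSpace E]
    [IsTopologicalAddGroup E] [ContinuousSMul ℝ E] [LocallyConvexSpace ℝ E]
    [BarrelledSpace ℝ E]
    {Ω : Type*} [MeasurableSpace Ω] (P : Measure Ω) [IsProbabilityMeasure P]
    [MeasurableSpace (E →L[ℝ] ℝ)] [BorelSpace (E →L[ℝ] ℝ)]
    (η : ℕ → Ω → (E →L[ℝ] ℝ)) (hηmeas : ∀ n, Measurable (η n))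
    (Z : ℕ → ℝ → Ω → (E →L[ℝ] ℝ)) (hZmeas : ∀ n t, Measurable (Z n t))
    (hZcont : ∀ n, ∀ᵐ ω ∂P, ContinuousOn (fun t => Z n t ω) (Set.Ici (0 : ℝ)))
    (S : ℕ → ℝ → (E →L[ℝ] E))
    (hSorbit : ∀ n (φ : E), ContinuousOn (fun t => S n t φ) (Set.Ici (0 : ℝ)))
    (A : ℕ → (E →L[ℝ] E))
    (Y : ℕ → E → ℝ → Ω → ℝ)
    (hY : ∀ n (φ : E) (t : ℝ) (ω : Ω), Y n φ t ω =
      (η n ω - Z n 0 ω) (S n t φ)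
        + (∫ s in (0 : ℝ)..t, (Z n s ω) (S n (t - s) (A n φ)))
        + (Z n t ω) φ)
    -- (1)
    (h1a : ∃ K : Set (E →L[ℝ] ℝ), Bornology.IsVonNBounded ℝ K ∧
      P {ω | η 0 ω ∈ K ∧ Z 0 0 ω ∈ K} = 1)
    (h1b : ∀ T : ℝ, 0 < T → ∃ C : ℝ, 0 < C ∧ ∃ ρ : Seminorm ℝ E, Continuous ρ ∧
      ∀ᵐ ω ∂P, ∀ t ∈ Set.Icc (0 : ℝ) T, ∀ ψ : E, |(Z 0 t ω) ψ| ≤ C * ρ ψ)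
    -- (2)
    (h2 : ∀ q : Seminorm ℝ (E →L[ℝ] ℝ), Continuous q → ∀ ε : ℝ, 0 < ε →
      Tendsto (fun n => P {ω | ε ≤ q (η n ω - η 0 ω)}) atTop (𝓝 0))
    -- (3)
    (h3a : ∀ (φ : E) (T : ℝ), 0 < T → ∀ ρ : Seminorm ℝ E, Continuous ρ →
      ∀ ε : ℝ, 0 < ε → ∃ N : ℕ, ∀ n ≥ N, ∀ t ∈ Set.Icc (0 : ℝ) T,
        ρ (S n t φ - S 0 t φ) < ε)
    (h3b : ∀ (φ : E) (T : ℝ), 0 < T → ∀ ρ : Seminorm ℝ E, Continuous ρ →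
      ∀ ε : ℝ, 0 < ε → ∃ N : ℕ, ∀ n ≥ N, ∀ s t : ℝ, 0 ≤ s → s ≤ t → t ≤ T →
        ρ (S n (t - s) (A n φ) - S 0 (t - s) (A 0 φ)) < ε)
    (h3c : ∀ (φ : E) (T : ℝ), 0 < T →
      Bornology.IsVonNBounded ℝ {x : E | ∃ n, ∃ t ∈ Set.Icc (0 : ℝ) T, x = S n t φ} ∧
      Bornology.IsVonNBounded ℝ
        {x : E | ∃ n, ∃ s t : ℝ, 0 ≤ s ∧ s ≤ t ∧ t ≤ T ∧ x = S n (t - s) (A n φ)})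
    -- (4)
    (h4 : ∀ q : Seminorm ℝ (E →L[ℝ] ℝ), Continuous q → ∀ T : ℝ, 0 < T →
      ∀ ε : ℝ, 0 < ε →
      Tendsto (fun n => P {ω | ∃ t ∈ Set.Icc (0 : ℝ) T, ε ≤ q (Z n t ω - Z 0 t ω)})
        atTop (𝓝 0)) :
    ∀ (φ : E) (T : ℝ), 0 < T → ∀ ε : ℝ, 0 < ε →
      Tendsto (fun n => P {ω | ∃ t ∈ Set.Icc (0 : ℝ) T, ε ≤ |Y n φ t ω - Y 0 φ t ω|})
        atTop (𝓝 0) := by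
  intro φ T hT ε hε
  set δ : ℝ := ε / 6 with hδdef
  have hδ : 0 < δ := by positivity
  -- seminorm dominating the (bounded) initial data
  obtain ⟨K, hK, hKP⟩ := h1a
  obtain ⟨ρK, hρKc, hρK⟩ := exists_primal_seminorm K hK
  -- the bound on `Z 0`
  obtain ⟨C, hC, ρ₀, hρ₀c, hρ₀⟩ := h1b T hT
  -- dual seminorms attached to the bounded orbit sets
  obtain ⟨hB1, hB2⟩ := h3c φ T hT
  obtain ⟨qB, hqBc, hqB⟩ := exists_dual_seminorm _ hB1
  obtain ⟨qB', hqB'c, hqB'⟩ := exists_dual_seminorm _ hB2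
  obtain ⟨qφ, hqφc, hqφ⟩ :=
    exists_dual_seminorm {φ} (Bornology.isVonNBounded_singleton φ)
  -- deterministic convergence indices
  obtain ⟨N1, hN1⟩ := h3a φ T hT ρK hρKc (δ / 2) (by positivity)
  obtain ⟨N2, hN2⟩ := h3b φ T hT ρ₀ hρ₀c (δ / (C * T)) (by positivity)
  -- the "good" measurable hull of the event `{η 0 ∈ K, Z 0 0 ∈ K}`
  set Kt : Set (E →L[ℝ] ℝ) := {f | ∀ ψ : E, |f ψ| ≤ ρK ψ} with hKt
  have hKsub : K ⊆ Kt := fun f hf ψ => hρK f hf ψ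
  have hKtclosed : IsClosed Kt := by
    have : Kt = ⋂ ψ : E, {f : E →L[ℝ] ℝ | |f ψ| ≤ ρK ψ} := by
      ext f; simp [hKt]
    rw [this]
    refine isClosed_iInter fun ψ => ?_
    have hcont : Continuous fun f : E →L[ℝ] ℝ => |f ψ| :=
      (continuous_eval_const ψ).abs
    exact isClosed_le hcont continuous_const
  have hGmeas : MeasurableSet {ω | η 0 ω ∈ Kt ∧ Z 0 0 ω ∈ Kt} := by
    exact ((hηmeas 0) hKtclosed.measurableSet).inter
      ((hZmeas 0 0) hKtclosed.measurableSet)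
  have hGfull : P {ω | η 0 ω ∈ Kt ∧ Z 0 0 ω ∈ Kt} = 1 := by
    refine le_antisymm prob_le_one ?_
    rw [← hKP]
    exact measure_mono fun ω hω => ⟨hKsub hω.1, hKsub hω.2⟩
  have hGae : ∀ᵐ ω ∂P, η 0 ω ∈ Kt ∧ Z 0 0 ω ∈ Kt := by
    rw [ae_iff]
    have := prob_compl_eq_zero_iff (μ := P) hGmeas |>.mpr hGfull
    simpa [Set.compl_setOf] using this
  -- the four "bad" events
  set A1 : ℕ → Set Ω := fun n => {ω | δ ≤ qB (η n ω - η 0 ω)} with hA1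
  set A2 : ℕ → Set Ω :=
    fun n => {ω | ∃ t ∈ Set.Icc (0 : ℝ) T, δ ≤ qB (Z n t ω - Z 0 t ω)} with hA2
  set A3 : ℕ → Set Ω :=
    fun n => {ω | ∃ t ∈ Set.Icc (0 : ℝ) T, δ / T ≤ qB' (Z n t ω - Z 0 t ω)} with hA3
  set A4 : ℕ → Set Ω :=
    fun n => {ω | ∃ t ∈ Set.Icc (0 : ℝ) T, δ ≤ qφ (Z n t ω - Z 0 t ω)} with hA4
  -- the pointwise estimate
  have key : ∀ n, N1 ≤ n → N2 ≤ n → ∀ ω : Ω,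
      (η 0 ω ∈ Kt ∧ Z 0 0 ω ∈ Kt) →
      (∀ t ∈ Set.Icc (0 : ℝ) T, ∀ ψ : E, |(Z 0 t ω) ψ| ≤ C * ρ₀ ψ) →
      ContinuousOn (fun t => Z n t ω) (Set.Ici (0 : ℝ)) →
      ContinuousOn (fun t => Z 0 t ω) (Set.Ici (0 : ℝ)) →
      ω ∉ A1 n → ω ∉ A2 n → ω ∉ A3 n → ω ∉ A4 n →
      ∀ t ∈ Set.Icc (0 : ℝ) T, |Y n φ t ω - Y 0 φ t ω| < ε := by
    intro n hn1 hn2 ω hG hZ0bdd hZncont hZ0cont hA1ω hA2ω hA3ω hA4ω t ht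
    obtain ⟨ht0, htT⟩ := ht
    -- extract the quantitative consequences of `ω ∉ Aᵢ n`
    simp only [hA1, Set.mem_setOf_eq, not_le] at hA1ω
    have hA2ω' : ∀ u ∈ Set.Icc (0 : ℝ) T, qB (Z n u ω - Z 0 u ω) < δ := by
      intro u hu; by_contra h
      exact hA2ω ⟨u, hu, not_lt.mp h⟩
    have hA3ω' : ∀ u ∈ Set.Icc (0 : ℝ) T, qB' (Z n u ω - Z 0 u ω) < δ / T := by
      intro u hu; by_contra h
      exact hA3ω ⟨u, hu, not_lt.mp h⟩
    have hA4ω' : ∀ u ∈ Set.Icc (0 : ℝ) T, qφ (Z n u ω - Z 0 u ω) < δ := by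
      intro u hu; by_contra h
      exact hA4ω ⟨u, hu, not_lt.mp h⟩
    rw [hY n φ t ω, hY 0 φ t ω]
    -- Term 1 : initial data
    set a := S n t φ with ha
    set b := S 0 t φ with hb
    have haB : a ∈ {x : E | ∃ m, ∃ u ∈ Set.Icc (0 : ℝ) T, x = S m u φ} :=
      ⟨n, t, ⟨ht0, htT⟩, rfl⟩
    have hT1 : |(η n ω - Z n 0 ω) a - (η 0 ω - Z 0 0 ω) b| < 3 * δ := by
      have hsplit : (η n ω - Z n 0 ω) a - (η 0 ω - Z 0 0 ω) b =
          (η n ω - η 0 ω) a - (Z n 0 ω - Z 0 0 ω) a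
            + ((η 0 ω) (a - b) - (Z 0 0 ω) (a - b)) := by
        simp only [ContinuousLinearMap.sub_apply, map_sub]
        ring
      rw [hsplit]
      have e1 : |(η n ω - η 0 ω) a| < δ :=
        lt_of_le_of_lt (hqB _ a haB) hA1ω
      have e2 : |(Z n 0 ω - Z 0 0 ω) a| < δ :=
        lt_of_le_of_lt (hqB _ a haB) (hA2ω' 0 ⟨le_refl _, hT.le⟩)
      have hρab : ρK (a - b) < δ / 2 := hN1 n hn1 t ⟨ht0, htT⟩
      have e3 : |(η 0 ω) (a - b)| < δ / 2 := lt_of_le_of_lt (hG.1 (a - b)) hρab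
      have e4 : |(Z 0 0 ω) (a - b)| < δ / 2 := lt_of_le_of_lt (hG.2 (a - b)) hρab
      calc |(η n ω - η 0 ω) a - (Z n 0 ω - Z 0 0 ω) a
            + ((η 0 ω) (a - b) - (Z 0 0 ω) (a - b))|
          ≤ |(η n ω - η 0 ω) a| + |(Z n 0 ω - Z 0 0 ω) a|
            + (|(η 0 ω) (a - b)| + |(Z 0 0 ω) (a - b)|) := by
            refine (abs_add_le _ _).trans ?_
            gcongr
            · exact abs_sub _ _
            · exact abs_sub _ _
        _ < δ + δ + (δ / 2 + δ / 2) := by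
            refine add_lt_add (add_lt_add e1 e2) (add_lt_add e3 e4)
        _ = 3 * δ := by ring
    -- Term 3 : the noise term
    have hT3 : |(Z n t ω) φ - (Z 0 t ω) φ| < δ := by
      have : (Z n t ω) φ - (Z 0 t ω) φ = (Z n t ω - Z 0 t ω) φ := by
        simp [ContinuousLinearMap.sub_apply]
      rw [this]
      exact lt_of_le_of_lt (hqφ _ φ rfl) (hA4ω' t ⟨ht0, htT⟩)
    -- Term 2 : the integral term
    have hdomn : ∀ u ∈ Set.Icc (0 : ℝ) t, ∀ f : E →L[ℝ] ℝ,
        |f (S n (t - u) (A n φ))| ≤ qB' f := fun u hu f =>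
      hqB' f _ ⟨n, u, t, hu.1, hu.2, htT, rfl⟩
    have hdom0 : ∀ u ∈ Set.Icc (0 : ℝ) t, ∀ f : E →L[ℝ] ℝ,
        |f (S 0 (t - u) (A 0 φ))| ≤ qB' f := fun u hu f =>
      hqB' f _ ⟨0, u, t, hu.1, hu.2, htT, rfl⟩
    have hxcont : ∀ m : ℕ, ContinuousOn (fun u => S m (t - u) (A m φ))
        (Set.Icc (0 : ℝ) t) := by
      intro m
      refine (hSorbit m (A m φ)).comp (continuousOn_const.sub continuousOn_id) ?_
      intro u hu
      simp only [Set.mem_Ici]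
      linarith [hu.2]
    have hgncont : ContinuousOn (fun s => (Z n s ω) (S n (t - s) (A n φ)))
        (Set.Icc (0 : ℝ) t) :=
      eval_continuousOn qB' hqB'c hdomn
        (hZncont.mono (Set.Icc_subset_Ici_self)) (hxcont n)
    have hg0cont : ContinuousOn (fun s => (Z 0 s ω) (S 0 (t - s) (A 0 φ)))
        (Set.Icc (0 : ℝ) t) :=
      eval_continuousOn qB' hqB'c hdom0
        (hZ0cont.mono (Set.Icc_subset_Ici_self)) (hxcont 0)
    have huIcc : Set.uIcc (0 : ℝ) t = Set.Icc 0 t := Set.uIcc_of_le ht0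
    have hIntn : IntervalIntegrable (fun s => (Z n s ω) (S n (t - s) (A n φ)))
        volume 0 t := (huIcc ▸ hgncont).intervalIntegrable
    have hInt0 : IntervalIntegrable (fun s => (Z 0 s ω) (S 0 (t - s) (A 0 φ)))
        volume 0 t := (huIcc ▸ hg0cont).intervalIntegrable
    have hT2 : |(∫ s in (0 : ℝ)..t, (Z n s ω) (S n (t - s) (A n φ)))
        - (∫ s in (0 : ℝ)..t, (Z 0 s ω) (S 0 (t - s) (A 0 φ)))| ≤ 2 * δ := by
      rw [← intervalIntegral.integral_sub hIntn hInt0]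
      have hptwise : ∀ s ∈ Set.uIoc (0 : ℝ) t,
          ‖(Z n s ω) (S n (t - s) (A n φ)) - (Z 0 s ω) (S 0 (t - s) (A 0 φ))‖
            ≤ 2 * δ / T := by
        intro s hs
        rw [Set.uIoc_of_le ht0] at hs
        obtain ⟨hs0, hst⟩ := hs
        have hsIcc : s ∈ Set.Icc (0 : ℝ) t := ⟨hs0.le, hst⟩
        have hsIccT : s ∈ Set.Icc (0 : ℝ) T := ⟨hs0.le, hst.trans htT⟩
        set x := S n (t - s) (A n φ) with hx
        set y := S 0 (t - s) (A 0 φ) with hy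
        have hsplit : (Z n s ω) x - (Z 0 s ω) y =
            (Z n s ω - Z 0 s ω) x + (Z 0 s ω) (x - y) := by
          simp only [ContinuousLinearMap.sub_apply, map_sub]
          ring
        rw [Real.norm_eq_abs, hsplit]
        have e1 : |(Z n s ω - Z 0 s ω) x| < δ / T :=
          lt_of_le_of_lt (hdomn s hsIcc _) (hA3ω' s hsIccT)
        have e2 : |(Z 0 s ω) (x - y)| ≤ δ / T := by
          refine (hZ0bdd s hsIccT (x - y)).trans ?_
          have hρ := hN2 n hn2 s t hs0.le hst htT
          have : C * ρ₀ (x - y) ≤ C * (δ / (C * T)) := by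
            exact mul_le_mul_of_nonneg_left hρ.le hC.le
          refine this.trans_eq ?_
          field_simp
        calc |(Z n s ω - Z 0 s ω) x + (Z 0 s ω) (x - y)|
            ≤ |(Z n s ω - Z 0 s ω) x| + |(Z 0 s ω) (x - y)| := abs_add_le _ _
          _ ≤ δ / T + δ / T := add_le_add e1.le e2
          _ = 2 * δ / T := by ring
      have hnorm := intervalIntegral.norm_integral_le_of_norm_le_const hptwise
      rw [Real.norm_eq_abs] at hnorm
      refine hnorm.trans ?_
      have : |t - 0| = t := by rw [sub_zero, abs_of_nonneg ht0]
      rw [this]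
      calc 2 * δ / T * t ≤ 2 * δ / T * T := by
            refine mul_le_mul_of_nonneg_left htT (by positivity)
        _ = 2 * δ := by field_simp
    -- putting everything together
    have habs : |((η n ω - Z n 0 ω) a
          + (∫ s in (0 : ℝ)..t, (Z n s ω) (S n (t - s) (A n φ))) + (Z n t ω) φ)
        - ((η 0 ω - Z 0 0 ω) b
          + (∫ s in (0 : ℝ)..t, (Z 0 s ω) (S 0 (t - s) (A 0 φ))) + (Z 0 t ω) φ)|
        < 3 * δ + 2 * δ + δ := by
      have hrw : ((η n ω - Z n 0 ω) a
            + (∫ s in (0 : ℝ)..t, (Z n s ω) (S n (t - s) (A n φ))) + (Z n t ω) φ)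
          - ((η 0 ω - Z 0 0 ω) b
            + (∫ s in (0 : ℝ)..t, (Z 0 s ω) (S 0 (t - s) (A 0 φ))) + (Z 0 t ω) φ)
          = ((η n ω - Z n 0 ω) a - (η 0 ω - Z 0 0 ω) b)
            + ((∫ s in (0 : ℝ)..t, (Z n s ω) (S n (t - s) (A n φ)))
              - (∫ s in (0 : ℝ)..t, (Z 0 s ω) (S 0 (t - s) (A 0 φ))))
            + ((Z n t ω) φ - (Z 0 t ω) φ) := by ring
      rw [hrw]
      calc |((η n ω - Z n 0 ω) a - (η 0 ω - Z 0 0 ω) b)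
            + ((∫ s in (0 : ℝ)..t, (Z n s ω) (S n (t - s) (A n φ)))
              - (∫ s in (0 : ℝ)..t, (Z 0 s ω) (S 0 (t - s) (A 0 φ))))
            + ((Z n t ω) φ - (Z 0 t ω) φ)|
          ≤ |(η n ω - Z n 0 ω) a - (η 0 ω - Z 0 0 ω) b|
            + |(∫ s in (0 : ℝ)..t, (Z n s ω) (S n (t - s) (A n φ)))
              - (∫ s in (0 : ℝ)..t, (Z 0 s ω) (S 0 (t - s) (A 0 φ)))|
            + |(Z n t ω) φ - (Z 0 t ω) φ| :=
            (abs_add_le _ _).trans (by gcongr; exact abs_add_le _ _)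
        _ < 3 * δ + 2 * δ + δ := by
            have := add_lt_add_of_lt_of_le hT1 hT2
            exact add_lt_add this hT3
    have h6δ : 3 * δ + 2 * δ + δ = ε := by rw [hδdef]; ring
    rw [h6δ] at habs
    exact habs
  -- the probabilistic conclusion
  have hbound : ∀ᶠ n in atTop,
      P {ω | ∃ t ∈ Set.Icc (0 : ℝ) T, ε ≤ |Y n φ t ω - Y 0 φ t ω|}
        ≤ P (A1 n) + P (A2 n) + P (A3 n) + P (A4 n) := by
    filter_upwards [eventually_ge_atTop N1, eventually_ge_atTop N2] with n hn1 hn2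
    -- the negligible set of "bad" paths for this `n`
    set Bad : Set Ω := {ω | ¬((η 0 ω ∈ Kt ∧ Z 0 0 ω ∈ Kt) ∧
        (∀ t ∈ Set.Icc (0 : ℝ) T, ∀ ψ : E, |(Z 0 t ω) ψ| ≤ C * ρ₀ ψ) ∧
        ContinuousOn (fun t => Z n t ω) (Set.Ici (0 : ℝ)) ∧
        ContinuousOn (fun t => Z 0 t ω) (Set.Ici (0 : ℝ)))} with hBad
    have hBadnull : P Bad = 0 := by
      have hae : ∀ᵐ ω ∂P, (η 0 ω ∈ Kt ∧ Z 0 0 ω ∈ Kt) ∧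
          (∀ t ∈ Set.Icc (0 : ℝ) T, ∀ ψ : E, |(Z 0 t ω) ψ| ≤ C * ρ₀ ψ) ∧
          ContinuousOn (fun t => Z n t ω) (Set.Ici (0 : ℝ)) ∧
          ContinuousOn (fun t => Z 0 t ω) (Set.Ici (0 : ℝ)) := by
        filter_upwards [hGae, hρ₀, hZcont n, hZcont 0] with ω h1 h2 h3 h4
        exact ⟨h1, h2, h3, h4⟩
      rw [ae_iff] at hae
      exact hae
    have hsub : {ω | ∃ t ∈ Set.Icc (0 : ℝ) T, ε ≤ |Y n φ t ω - Y 0 φ t ω|}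
        ⊆ A1 n ∪ A2 n ∪ A3 n ∪ A4 n ∪ Bad := by
      intro ω hω
      by_contra hcon
      simp only [Set.mem_union, not_or] at hcon
      obtain ⟨⟨⟨⟨hc1, hc2⟩, hc3⟩, hc4⟩, hc5⟩ := hcon
      rw [hBad, Set.mem_setOf_eq, not_not] at hc5
      obtain ⟨hg1, hg2, hg3, hg4⟩ := hc5
      obtain ⟨t, ht, hεt⟩ := hω
      exact absurd hεt (not_le.mpr
        (key n hn1 hn2 ω hg1 hg2 hg3 hg4 hc1 hc2 hc3 hc4 t ht))
    calc P {ω | ∃ t ∈ Set.Icc (0 : ℝ) T, ε ≤ |Y n φ t ω - Y 0 φ t ω|}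
        ≤ P (A1 n ∪ A2 n ∪ A3 n ∪ A4 n ∪ Bad) := measure_mono hsub
      _ ≤ P (A1 n ∪ A2 n ∪ A3 n ∪ A4 n) + P Bad := measure_union_le _ _
      _ = P (A1 n ∪ A2 n ∪ A3 n ∪ A4 n) := by rw [hBadnull, add_zero]
      _ ≤ P (A1 n ∪ A2 n ∪ A3 n) + P (A4 n) := measure_union_le _ _
      _ ≤ P (A1 n ∪ A2 n) + P (A3 n) + P (A4 n) := by
          gcongr; exact measure_union_le _ _
      _ ≤ P (A1 n) + P (A2 n) + P (A3 n) + P (A4 n) := by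
          gcongr; exact measure_union_le _ _
  -- each of the four probabilities tends to 0
  have t1 : Tendsto (fun n => P (A1 n)) atTop (𝓝 0) := h2 qB hqBc δ hδ
  have t2 : Tendsto (fun n => P (A2 n)) atTop (𝓝 0) := h4 qB hqBc T hT δ hδ
  have t3 : Tendsto (fun n => P (A3 n)) atTop (𝓝 0) :=
    h4 qB' hqB'c T hT (δ / T) (by positivity)
  have t4 : Tendsto (fun n => P (A4 n)) atTop (𝓝 0) := h4 qφ hqφc T hT δ hδ
  have tsum : Tendsto (fun n => P (A1 n) + P (A2 n) + P (A3 n) + P (A4 n))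
      atTop (𝓝 0) := by
    have h12 : Tendsto (fun n => P (A1 n) + P (A2 n)) atTop (𝓝 0) := by
      simpa using t1.add t2
    have h123 : Tendsto (fun n => P (A1 n) + P (A2 n) + P (A3 n)) atTop (𝓝 0) := by
      simpa using h12.add t3
    simpa using h123.add t4
  exact tendsto_of_tendsto_of_tendsto_of_le_of_le' tendsto_const_nhds tsum
    (Eventually.of_forall fun n => zero_le) hbound
end
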